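/- arXiv:0906.1165 — 2 statements merged into one kernel-verified Lean document; each statement's English description precedes it below -/
import Mathlib

section
/- If G is a permutation graph on n vertices, then the threshold dimension of G satisfies t(G) ≤ χ(Ḡ), where Ḡ is the complement of G and χ denotes chromatic number; that is, there exist χ(Ḡ) threshold graphs T₁, …, T_{χ(Ḡ)} on V(G) whose edge sets have union equal to E(G). -/
/-- The permutation graph `G[Π]` on `Fin n`: `i ~ j` iff `(i-j)(Π⁻¹ i - Π⁻¹ j) < 0`. -/
def permGraph (n : ℕ) (π : Equiv.Perm (Fin n)) : SimpleGraph (Fin n) where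
  Adj i j := ((i : ℤ) - (j : ℤ)) * ((π.symm i : ℤ) - ((π.symm j : ℤ))) < 0
  symm := by
    constructor; intro i j h
    have e : ((j : ℤ) - (i : ℤ)) * ((π.symm j : ℤ) - (π.symm i : ℤ))
        = ((i : ℤ) - (j : ℤ)) * ((π.symm i : ℤ) - (π.symm j : ℤ)) := by ring
    simp only [e]
    exact h
  loopless := by constructor; intro i; simp

/-- A set of vertices is stable (independent) if no two of its members are adjacent. -/
def IsStableSet {V : Type*} (G : SimpleGraph V) (s : Set V) : Prop :=
  s.Pairwise fun a b => ¬ G.Adj a b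

/-- A finite graph is a threshold graph if there are nonnegative vertex weights and a
threshold `t` such that a set of vertices is stable iff its total weight is at most `t`. -/
def IsThresholdGraph {V : Type*} [Fintype V] (G : SimpleGraph V) : Prop :=
  ∃ (w : V → ℝ) (t : ℝ), (∀ v, 0 ≤ w v) ∧
    ∀ U : Finset V, ((∑ v ∈ U, w v) ≤ t ↔ IsStableSet G ↑U)

/-- A graph is a permutation graph if it is isomorphic to `permGraph n π` for some
permutation `π` of `Fin n`. -/
def IsPermutationGraph {V : Type*} (G : SimpleGraph V) : Prop :=
  ∃ (n : ℕ) (π : Equiv.Perm (Fin n)), Nonempty (G ≃g permGraph n π)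

/-- The threshold dimension of `G`: the least `k` such that the edge set of `G` is the
union of the edge sets of `k` threshold graphs on `V(G)`. -/
noncomputable def thresholdDim {V : Type*} [Fintype V] (G : SimpleGraph V) : ℕ :=
  sInf {k | ∃ T : Fin k → SimpleGraph V,
    (∀ i, IsThresholdGraph (T i)) ∧ (⋃ i, (T i).edgeSet) = G.edgeSet}

/-- The independence number `α(G)`. -/
noncomputable def alphaNum {V : Type*} [Fintype V] (G : SimpleGraph V) : ℕ :=
  sSup {k | ∃ s : Finset V, s.card = k ∧ IsStableSet G ↑s}

/-- The graph `mK₂`: a perfect matching on `2m` vertices. -/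
def matchingGraph (m : ℕ) : SimpleGraph (Fin m × Bool) where
  Adj a b := a.1 = b.1 ∧ a.2 ≠ b.2
  symm := by constructor; rintro a b ⟨h1, h2⟩; exact ⟨h1.symm, h2.symm⟩
  loopless := by constructor; rintro a ⟨h1, h2⟩; exact h2 rfl

open Finset

/-- star graph at color class i -/
def starAt {n k : ℕ} (G : SimpleGraph (Fin n)) (c : Fin n → Fin k) (i : Fin k) :
    SimpleGraph (Fin n) where
  Adj a b := G.Adj a b ∧ ((a < b ∧ c b = i) ∨ (b < a ∧ c a = i))
  symm := by constructor; rintro a b ⟨h1, h2⟩; exact ⟨h1.symm, h2.symm⟩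
  loopless := by constructor; rintro a ⟨h1, _⟩; exact G.loopless.irrefl a h1

lemma starAt_isThreshold {n k : ℕ} (G : SimpleGraph (Fin n))
    (hP : ∀ u a b : Fin n, u < a → a < b → G.Adj u a → G.Adj a b → G.Adj u b)
    (c : Fin n → Fin k)
    (hc : ∀ a b : Fin n, a ≠ b → c a = c b → G.Adj a b) (i : Fin k) :
    IsThresholdGraph (starAt G c i) := by
  classical
  set B : ℝ := (n : ℝ) + 1 with hBdef
  set δ : ℝ := 1 / (4 * B ^ (n + 1)) with hδdef
  have hBpos : (0:ℝ) < B := by positivity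
  have hB1 : (1:ℝ) ≤ B := by simp only [hBdef]; linarith [Nat.cast_nonneg (α := ℝ) n]
  have hδpos : (0:ℝ) < δ := by rw [hδdef]; positivity
  set C : Finset (Fin n) := univ.filter (fun v => c v = i) with hCdef
  set r : Fin n → ℕ := fun u => (C.filter (fun b => u < b ∧ G.Adj u b)).card with hrdef
  set big : Fin n → ℕ := fun b => (C.filter (fun b' => b < b')).card with hbigdef
  have hmemC : ∀ v, v ∈ C ↔ c v = i := by intro v; simp [hCdef]
  have hrn : ∀ u, r u ≤ n := by
    intro u
    calc r u ≤ C.card := card_filter_le _ _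
      _ ≤ (univ : Finset (Fin n)).card := card_le_univ _
      _ = n := by simp
  have hbign : ∀ u, big u ≤ n := by
    intro u
    calc big u ≤ C.card := card_filter_le _ _
      _ ≤ (univ : Finset (Fin n)).card := card_le_univ _
      _ = n := by simp
  have hkey : ∀ m : ℕ, m ≤ n → (n:ℝ) * B ^ m * δ ≤ 1/4 := by
    intro m hm
    have h1 : (n:ℝ) * B ^ m * δ ≤ (n:ℝ) * B ^ n * δ :=
      mul_le_mul_of_nonneg_right
        (mul_le_mul_of_nonneg_left (pow_le_pow_right₀ hB1 hm) (Nat.cast_nonneg n)) hδpos.le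
    have h2 : (n:ℝ) * B ^ n * δ = n / (4*B) := by
      rw [hδdef, pow_succ]
      field_simp
    have h3 : (n:ℝ) / (4*B) ≤ 1/4 := by
      rw [div_le_div_iff₀ (by positivity) (by norm_num)]
      nlinarith [hBpos]
    linarith
  set w : Fin n → ℝ := fun v => if v ∈ C then 1 - (n:ℝ) * B ^ (big v) * δ else B ^ (r v) * δ
    with hwdef
  have hwC : ∀ v ∈ C, w v = 1 - (n:ℝ) * B ^ (big v) * δ := by
    intro v hv; simp [hwdef, hv]
  have hwD : ∀ v, v ∉ C → w v = B ^ (r v) * δ := by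
    intro v hv; simp [hwdef, hv]
  have hwC' : ∀ v ∈ C, (3:ℝ)/4 ≤ w v := by
    intro v hv; rw [hwC v hv]; linarith [hkey (big v) (hbign v)]
  have hwnn : ∀ v, 0 ≤ w v := by
    intro v
    by_cases hv : v ∈ C
    · linarith [hwC' v hv]
    · rw [hwD v hv]; positivity
  -- adjacency facts
  have hadjCC : ∀ a ∈ C, ∀ b ∈ C, a ≠ b → (starAt G c i).Adj a b := by
    intro a ha b hb hne
    refine ⟨hc a b hne (by rw [(hmemC a).mp ha, (hmemC b).mp hb]), ?_⟩
    rcases lt_or_gt_of_ne hne with h | h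
    · exact Or.inl ⟨h, (hmemC b).mp hb⟩
    · exact Or.inr ⟨h, (hmemC a).mp ha⟩
  have hnonDD : ∀ a b : Fin n, a ∉ C → b ∉ C → ¬ (starAt G c i).Adj a b := by
    rintro a b ha hb ⟨_, h | h⟩
    · exact hb ((hmemC b).mpr h.2)
    · exact ha ((hmemC a).mpr h.2)
  have hchar : ∀ u, u ∉ C → ∀ b ∈ C, ((starAt G c i).Adj u b ↔ big b < r u) := by
    intro u hu b hb
    constructor
    · rintro ⟨hadj, h | h⟩
      · have hsub : insert b (C.filter (fun b' => b < b')) ⊆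
            C.filter (fun b' => u < b' ∧ G.Adj u b') := by
          intro x hx
          rcases mem_insert.mp hx with rfl | hx
          · exact mem_filter.mpr ⟨hb, h.1, hadj⟩
          · obtain ⟨hxC, hbx⟩ := mem_filter.mp hx
            have hadjbx : G.Adj b x :=
              hc b x (ne_of_lt hbx) (by rw [(hmemC b).mp hb, (hmemC x).mp hxC])
            exact mem_filter.mpr ⟨hxC, h.1.trans hbx, hP u b x h.1 hbx hadj hadjbx⟩
        have hnotmem : b ∉ C.filter (fun b' => b < b') := by simp
        have := card_le_card hsub
        rw [card_insert_of_notMem hnotmem] at this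
        exact this
      · exact absurd ((hmemC u).mpr h.2) hu
    · intro hlt
      by_contra hnadj
      have hsub : C.filter (fun b' => u < b' ∧ G.Adj u b') ⊆ C.filter (fun b' => b < b') := by
        intro x hx
        obtain ⟨hxC, hux, hadjux⟩ := mem_filter.mp hx
        refine mem_filter.mpr ⟨hxC, ?_⟩
        rcases lt_trichotomy x b with hxb | heq | hbx
        · have hadjxb : G.Adj x b :=
            hc x b (ne_of_lt hxb) (by rw [(hmemC x).mp hxC, (hmemC b).mp hb])
          exact absurd ⟨hP u x b hux hxb hadjux hadjxb,
            Or.inl ⟨hux.trans hxb, (hmemC b).mp hb⟩⟩ hnadj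
        · subst heq
          exact absurd ⟨hadjux, Or.inl ⟨hux, (hmemC _).mp hb⟩⟩ hnadj
        · exact hbx
      exact absurd (card_le_card hsub) (not_le.mpr hlt)
  refine ⟨w, 1, hwnn, ?_⟩
  intro U
  have hsplit : ∑ v ∈ U.filter (· ∈ C), w v + ∑ v ∈ U.filter (fun v => ¬ v ∈ C), w v
      = ∑ v ∈ U, w v := sum_filter_add_sum_filter_not U _ w
  constructor
  · intro hsum x hx y hy hne
    rw [Finset.mem_coe] at hx hy
    by_contra hadj
    have hpair : w x + w y ≤ ∑ v ∈ U, w v := by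
      have hsub : {x, y} ⊆ U := by
        intro z hz
        rcases mem_insert.mp hz with rfl | hz
        · exact hx
        · rw [mem_singleton.mp hz]; exact hy
      calc w x + w y = ∑ v ∈ ({x, y} : Finset (Fin n)), w v := (sum_pair hne).symm
        _ ≤ ∑ v ∈ U, w v := sum_le_sum_of_subset_of_nonneg hsub (fun v _ _ => hwnn v)
    by_cases hxC : x ∈ C <;> by_cases hyC : y ∈ C
    · linarith [hwC' x hxC, hwC' y hyC]
    · -- x ∈ C, y ∉ C
      have hlt : big x < r y := (hchar y hyC x hxC).mp ((starAt G c i).adj_symm hadj)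
      have h3 : B ^ (big x) * B ≤ B ^ (r y) := by
        rw [← pow_succ]; exact pow_le_pow_right₀ hB1 hlt
      have hpow : (0:ℝ) < B ^ (big x) := by positivity
      have hx' := hwC x hxC
      have hy' := hwD y hyC
      have h4 : B ^ (big x) * B * δ ≤ B ^ (r y) * δ := mul_le_mul_of_nonneg_right h3 hδpos.le
      have h5 : B ^ (big x) * B * δ = (n:ℝ) * B ^ (big x) * δ + B ^ (big x) * δ := by
        rw [hBdef]; ring
      have h6 : (0:ℝ) < B ^ (big x) * δ := mul_pos hpow hδpos
      have : (1:ℝ) < w x + w y := by rw [hx', hy']; linarith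
      linarith
    · -- y ∈ C, x ∉ C
      have hlt : big y < r x := (hchar x hxC y hyC).mp hadj
      have h3 : B ^ (big y) * B ≤ B ^ (r x) := by
        rw [← pow_succ]; exact pow_le_pow_right₀ hB1 hlt
      have hpow : (0:ℝ) < B ^ (big y) := by positivity
      have hy' := hwC y hyC
      have hx' := hwD x hxC
      have h4 : B ^ (big y) * B * δ ≤ B ^ (r x) * δ := mul_le_mul_of_nonneg_right h3 hδpos.le
      have h5 : B ^ (big y) * B * δ = (n:ℝ) * B ^ (big y) * δ + B ^ (big y) * δ := by
        rw [hBdef]; ring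
      have h6 : (0:ℝ) < B ^ (big y) * δ := mul_pos hpow hδpos
      have : (1:ℝ) < w x + w y := by rw [hx', hy']; linarith
      linarith
    · exact hnonDD x y hxC hyC hadj
  · intro hstab
    rw [← hsplit]
    have hDcard : (U.filter (fun v => ¬ v ∈ C)).card ≤ n := by
      calc (U.filter (fun v => ¬ v ∈ C)).card ≤ (univ : Finset (Fin n)).card :=
            card_le_univ _
        _ = n := by simp
    rcases Finset.eq_empty_or_nonempty (U.filter (· ∈ C)) with hA | ⟨b, hbA⟩
    · rw [hA, sum_empty]
      have hboundD : ∀ v ∈ U.filter (fun v => ¬ v ∈ C), w v ≤ B ^ n * δ := by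
        intro v hv
        obtain ⟨_, hvC⟩ := mem_filter.mp hv
        rw [hwD v hvC]
        have : B ^ (r v) ≤ B ^ n := pow_le_pow_right₀ hB1 (hrn v)
        nlinarith [hδpos]
      have := sum_le_card_nsmul _ _ _ hboundD
      have hcast : ((U.filter (fun v => ¬ v ∈ C)).card : ℝ) * (B ^ n * δ)
          ≤ (n:ℝ) * (B ^ n * δ) := by
        have h7 : ((U.filter (fun v => ¬ v ∈ C)).card : ℝ) ≤ (n:ℝ) := by exact_mod_cast hDcard
        exact mul_le_mul_of_nonneg_right h7 (by positivity)
      have hk := hkey n le_rfl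
      rw [nsmul_eq_mul] at this
      linarith
    · obtain ⟨hbU, hbC⟩ := mem_filter.mp hbA
      have hAeq : U.filter (· ∈ C) = {b} := by
        apply Finset.eq_singleton_iff_unique_mem.mpr
        refine ⟨hbA, fun a ha => ?_⟩
        obtain ⟨haU, haC⟩ := mem_filter.mp ha
        by_contra hne
        exact hstab (Finset.mem_coe.mpr haU) (Finset.mem_coe.mpr hbU) hne
          (hadjCC a haC b hbC hne)
      rw [hAeq, sum_singleton, hwC b hbC]
      have hboundD : ∀ v ∈ U.filter (fun v => ¬ v ∈ C), w v ≤ B ^ (big b) * δ := by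
        intro v hv
        obtain ⟨hvU, hvC⟩ := mem_filter.mp hv
        have hne : v ≠ b := fun h => hvC (h ▸ hbC)
        have hnadj : ¬ (starAt G c i).Adj v b :=
          hstab (Finset.mem_coe.mpr hvU) (Finset.mem_coe.mpr hbU) hne
        have hle : r v ≤ big b := by
          by_contra h
          exact hnadj ((hchar v hvC b hbC).mpr (not_le.mp h))
        rw [hwD v hvC]
        have : B ^ (r v) ≤ B ^ (big b) := pow_le_pow_right₀ hB1 hle
        nlinarith [hδpos]
      have := sum_le_card_nsmul _ _ _ hboundD
      rw [nsmul_eq_mul] at this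
      have hcast : ((U.filter (fun v => ¬ v ∈ C)).card : ℝ) * (B ^ (big b) * δ)
          ≤ (n:ℝ) * (B ^ (big b) * δ) := by
        have hcc : ((U.filter (fun v => ¬ v ∈ C)).card : ℝ) ≤ (n:ℝ) := by exact_mod_cast hDcard
        exact mul_le_mul_of_nonneg_right hcc (by positivity)
      have hpow : (0:ℝ) < B ^ (big b) := pow_pos hBpos _
      nlinarith [hδpos]

lemma starAt_union {n k : ℕ} (G : SimpleGraph (Fin n)) (c : Fin n → Fin k) :
    (⋃ i, (starAt G c i).edgeSet) = G.edgeSet := by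
  ext s
  induction s using Sym2.ind with
  | _ a b =>
    simp only [Set.mem_iUnion, SimpleGraph.mem_edgeSet]
    constructor
    · rintro ⟨i, h, -⟩; exact h
    · intro h
      rcases lt_trichotomy a b with hab | heq | hba
      · exact ⟨c b, h, Or.inl ⟨hab, rfl⟩⟩
      · exact absurd heq (G.ne_of_adj h)
      · exact ⟨c a, h, Or.inr ⟨hba, rfl⟩⟩

lemma isThresholdGraph_comap {V W : Type*} [Fintype V] [Fintype W]
    (H : SimpleGraph W) (e : V ≃ W) (h : IsThresholdGraph H) :
    IsThresholdGraph (H.comap e) := by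
  obtain ⟨w, t, hw, hiff⟩ := h
  refine ⟨fun v => w (e v), t, fun v => hw _, fun U => ?_⟩
  have hsum : ∑ v ∈ U, w (e v) = ∑ v ∈ U.map e.toEmbedding, w v :=
    (Finset.sum_map U e.toEmbedding w).symm
  rw [hsum, hiff]
  unfold IsStableSet
  rw [Finset.coe_map]
  constructor
  · intro hst x hx y hy hne hadj
    exact hst (Set.mem_image_of_mem _ hx) (Set.mem_image_of_mem _ hy)
      (fun hh => hne (e.injective (by simpa using hh))) (by simpa using hadj)
  · rintro hst x ⟨a, ha, rfl⟩ y ⟨b, hb, rfl⟩ hne hadj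
    exact hst ha hb (fun hh => hne (by simp [hh])) hadj

/-- Theorem: if `G` is a permutation graph then `t(G) ≤ χ(Ḡ)`. -/
theorem thresholdDim_le_chromaticNumber_compl
    {V : Type*} [Fintype V] (G : SimpleGraph V)
    (hG : IsPermutationGraph G) :
    (thresholdDim G : ℕ∞) ≤ Gᶜ.chromaticNumber := by
  obtain ⟨n, π, ⟨e⟩⟩ := hG
  have hP : ∀ u a b : Fin n, u < a → a < b →
      (permGraph n π).Adj u a → (permGraph n π).Adj a b → (permGraph n π).Adj u b := by
    intro u a b hua hab h1 h2
    have hua' : (u:ℤ) < (a:ℤ) := by exact_mod_cast hua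
    have hab' : (a:ℤ) < (b:ℤ) := by exact_mod_cast hab
    simp only [permGraph] at h1 h2 ⊢
    have hpa : ((π.symm a : Fin n) : ℤ) < ((π.symm u : Fin n) : ℤ) := by nlinarith
    have hpb : ((π.symm b : Fin n) : ℤ) < ((π.symm a : Fin n) : ℤ) := by nlinarith
    nlinarith
  have main : ∀ m : ℕ, Gᶜ.Colorable m → thresholdDim G ≤ m := by
    intro m hm
    obtain ⟨Co⟩ := hm
    set c : Fin n → Fin m := fun v => Co (e.symm v) with hc'
    have hc : ∀ a b : Fin n, a ≠ b → c a = c b → (permGraph n π).Adj a b := by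
      intro a b hne heq
      have hne' : e.symm a ≠ e.symm b := fun h => hne (by simpa using congrArg e h)
      have hnadj : ¬ Gᶜ.Adj (e.symm a) (e.symm b) := fun h => Co.valid h heq
      have hGadj : G.Adj (e.symm a) (e.symm b) := by
        by_contra h; exact hnadj ⟨hne', h⟩
      have := e.map_rel_iff.mpr hGadj
      simpa using this
    have hthm : ∀ i, IsThresholdGraph ((starAt (permGraph n π) c i).comap ⇑e.toEquiv) :=
      fun i => isThresholdGraph_comap _ _ (starAt_isThreshold (permGraph n π) hP c hc i)
    have hun : (⋃ i, ((starAt (permGraph n π) c i).comap ⇑e.toEquiv).edgeSet) = G.edgeSet := by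
      ext s
      induction s using Sym2.ind with
      | _ a b =>
        simp only [Set.mem_iUnion, SimpleGraph.mem_edgeSet, SimpleGraph.comap_adj]
        have h1 := Set.ext_iff.mp (starAt_union (permGraph n π) c) s(e a, e b)
        simp only [Set.mem_iUnion, SimpleGraph.mem_edgeSet] at h1
        exact h1.trans e.map_rel_iff
    exact Nat.sInf_le ⟨fun i => (starAt (permGraph n π) c i).comap ⇑e.toEquiv, hthm, hun⟩
  rw [SimpleGraph.chromaticNumber]
  refine le_iInf₂ fun m hm => ?_
  exact_mod_cast main m hm
end

section
/- For every m ≥ 1, the graph mK₂ (the disjoint union of m independent edges, i.e., a perfect matching on 2m vertices) is a permutation graph, and its threshold dimension equals m: there exist m threshold graphs whose edge sets have union E(mK₂), and no family of fewer than m threshold graphs has edge-set union equal to E(mK₂). -/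
section Aux

/-- The pair-swapping involution on `Fin (2*m)`. -/
def flipPerm (m : ℕ) : Equiv.Perm (Fin (2*m)) where
  toFun i := ⟨2*(i.val/2) + (1 - i.val % 2), by omega⟩
  invFun i := ⟨2*(i.val/2) + (1 - i.val % 2), by omega⟩
  left_inv i := by ext; simp; omega
  right_inv i := by ext; simp; omega

lemma flipPerm_symm_val (m : ℕ) (i : Fin (2*m)) :
    ((flipPerm m).symm i).val = 2*(i.val/2) + (1 - i.val % 2) := rfl

lemma quad (d : ℤ) : (2*d - 1) * (2*d + 1) < 0 ↔ d = 0 := by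
  constructor
  · intro h
    by_contra hd
    have h2 : 1 ≤ d ∨ d ≤ -1 := by omega
    rcases h2 with h2 | h2 <;> nlinarith
  · rintro rfl; norm_num

lemma flip_adj (m : ℕ) (u v : Fin (2*m)) :
    (permGraph (2*m) (flipPerm m)).Adj u v ↔ u.val / 2 = v.val / 2 ∧ u ≠ v := by
  show ((u : ℤ) - v) * (((flipPerm m).symm u : ℤ) - ((flipPerm m).symm v : ℤ)) < 0 ↔ _
  have hu := flipPerm_symm_val m u
  have hv := flipPerm_symm_val m v
  have hne : (u ≠ v) ↔ (u.val ≠ v.val) := by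
    constructor
    · intro h h'; exact h (Fin.ext h')
    · intro h h'; exact h (by rw [h'])
  rw [hne]
  have hx := u.isLt; have hy := v.isLt
  obtain ⟨p, r, hr, hx'⟩ : ∃ p r, r < 2 ∧ u.val = 2*p + r := ⟨u.val/2, u.val % 2, by omega, by omega⟩
  obtain ⟨q, s, hs, hy'⟩ : ∃ q s, s < 2 ∧ v.val = 2*q + s := ⟨v.val/2, v.val % 2, by omega, by omega⟩
  have h1 : (((flipPerm m).symm u) : ℤ) = 2*p + (1 - r) := by
    rw [hu, hx']; push_cast; omega
  have h2 : (((flipPerm m).symm v) : ℤ) = 2*q + (1 - s) := by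
    rw [hv, hy']; push_cast; omega
  have h3 : ((u : Fin (2*m)) : ℤ) = 2*p + r := by rw [hx']; push_cast; ring
  have h4 : ((v : Fin (2*m)) : ℤ) = 2*q + s := by rw [hy']; push_cast; ring
  rw [h1, h2, h3, h4, hx', hy']
  interval_cases r <;> interval_cases s <;> push_cast
  · constructor
    · intro h; exfalso; nlinarith [sq_nonneg ((p:ℤ) - q)]
    · omega
  · have : ((2*(p:ℤ) + 0) - (2*q + 1)) * ((2*p + 1) - (2*q + 0))
        = (2*((p:ℤ)-q) - 1) * (2*((p:ℤ)-q) + 1) := by ring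
    rw [this, quad]
    constructor
    · intro h
      have h' : (p:ℤ) = q := by linarith
      have : p = q := by exact_mod_cast h'
      omega
    · intro ⟨h, _⟩; have : p = q := by omega
      simp [this]
  · have : ((2*(p:ℤ) + 1) - (2*q + 0)) * ((2*p + 0) - (2*q + 1))
        = (2*((q:ℤ)-p) - 1) * (2*((q:ℤ)-p) + 1) := by ring
    rw [this, quad]
    constructor
    · intro h
      have h' : (q:ℤ) = p := by linarith
      have : q = p := by exact_mod_cast h'
      omega
    · intro ⟨h, _⟩; have : q = p := by omega
      simp [this]
  · constructor
    · intro h; exfalso; nlinarith [sq_nonneg ((p:ℤ) - q)]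
    · omega

end Aux

/-- Explicit equivalence `Fin m × Bool ≃ Fin (2*m)`. -/
def pairEquiv (m : ℕ) : Fin m × Bool ≃ Fin (2*m) where
  toFun p := ⟨2*p.1.val + (if p.2 then 1 else 0), by
    have := p.1.isLt; cases p.2 <;> simp <;> omega⟩
  invFun i := (⟨i.val/2, by omega⟩, decide (i.val % 2 = 1))
  left_inv := by
    rintro ⟨a, b⟩
    apply Prod.ext
    · ext
      show (2*a.val + (if b then 1 else 0))/2 = a.val
      cases b <;> simp <;> omega
    · show decide ((2*a.val + (if b then 1 else 0)) % 2 = 1) = b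
      cases b <;> simp <;> omega
  right_inv i := by
    ext
    show 2*(i.val/2) + (if decide (i.val % 2 = 1) then 1 else 0) = i.val
    by_cases h : i.val % 2 = 1 <;> simp [h] <;> omega

lemma matching_isPerm (m : ℕ) : IsPermutationGraph (matchingGraph m) := by
  refine ⟨2*m, flipPerm m, ⟨⟨pairEquiv m, ?_⟩⟩⟩
  rintro ⟨a, ba⟩ ⟨c, bc⟩
  rw [flip_adj]
  show (_ ∧ _) ↔ ((a = c) ∧ ba ≠ bc)
  have h1 : ((pairEquiv m) (a, ba)).val = 2*a.val + (if ba then 1 else 0) := rfl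
  have h2 : ((pairEquiv m) (c, bc)).val = 2*c.val + (if bc then 1 else 0) := rfl
  cases ba <;> cases bc <;>
    simp [h1, h2, Fin.ext_iff, Prod.ext_iff, ne_eq, EmbeddingLike.apply_eq_iff_eq] <;>
    omega

/-- The single-edge graph joining `(i,false)` and `(i,true)`. -/
def edgeGraph (m : ℕ) (i : Fin m) : SimpleGraph (Fin m × Bool) where
  Adj a b := a.1 = i ∧ b.1 = i ∧ a.2 ≠ b.2
  symm := by constructor; rintro a b ⟨h1, h2, h3⟩; exact ⟨h2, h1, h3.symm⟩
  loopless := by constructor; rintro a ⟨h1, h2, h3⟩; exact h3 rfl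

lemma edgeGraph_threshold (m : ℕ) (i : Fin m) : IsThresholdGraph (edgeGraph m i) := by
  classical
  refine ⟨fun v => if v.1 = i then 1 else 0, 1, fun v => by positivity, fun U => ?_⟩
  have hsum : (∑ v ∈ U, if v.1 = i then (1:ℝ) else 0)
      = ((U.filter (fun v => v.1 = i)).card : ℝ) := by
    rw [Finset.sum_boole]
  rw [hsum]
  have hcard : ((U.filter (fun v => v.1 = i)).card : ℝ) ≤ 1
      ↔ (U.filter (fun v => v.1 = i)).card ≤ 1 := by
    exact_mod_cast Iff.rfl
  rw [hcard, Finset.card_le_one]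
  constructor
  · intro h x hx y hy hne hadj
    obtain ⟨h1, h2, h3⟩ := hadj
    exact hne (h x (Finset.mem_filter.mpr ⟨hx, h1⟩) y (Finset.mem_filter.mpr ⟨hy, h2⟩))
  · intro h x hx y hy
    simp only [Finset.mem_filter] at hx hy
    by_contra hne
    have hb : x.2 ≠ y.2 := by
      intro hb
      exact hne (Prod.ext (hx.2.trans hy.2.symm) hb)
    exact h hx.1 hy.1 hne ⟨hx.2, hy.2, hb⟩

lemma edgeGraph_union (m : ℕ) :
    (⋃ i, (edgeGraph m i).edgeSet) = (matchingGraph m).edgeSet := by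
  ext e
  induction e using Sym2.ind with
  | _ a b =>
    simp only [Set.mem_iUnion, SimpleGraph.mem_edgeSet]
    constructor
    · rintro ⟨i, h1, h2, h3⟩
      exact ⟨h1.trans h2.symm, h3⟩
    · rintro ⟨h1, h2⟩
      exact ⟨a.1, rfl, h1.symm, h2⟩

lemma lower_bound (m : ℕ) (k : ℕ) (hk : k < m) :
    ¬ ∃ T : Fin k → SimpleGraph (Fin m × Bool),
        (∀ i, IsThresholdGraph (T i)) ∧
        (⋃ i, (T i).edgeSet) = (matchingGraph m).edgeSet := by
  rintro ⟨T, hT, hU⟩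
  have hmem : ∀ j : Fin m, ∃ i, (T i).Adj (j, false) (j, true) := by
    intro j
    have : s((j, false), (j, true)) ∈ (matchingGraph m).edgeSet := by
      simp [matchingGraph, SimpleGraph.mem_edgeSet]
    rw [← hU, Set.mem_iUnion] at this
    exact this
  choose g hg using hmem
  have hcard : Fintype.card (Fin k) < Fintype.card (Fin m) := by simpa using hk
  obtain ⟨j, j', hjj, hgj⟩ := Fintype.exists_ne_map_eq_of_card_lt g hcard
  set i := g j with hi
  have hsub : ∀ a b, (T i).Adj a b → (matchingGraph m).Adj a b := by
    intro a b h
    have : s(a, b) ∈ (matchingGraph m).edgeSet := by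
      rw [← hU]
      exact Set.mem_iUnion.mpr ⟨i, h⟩
    exact this
  have hab : (T i).Adj (j, false) (j, true) := hg j
  have hcd : (T i).Adj (j', false) (j', true) := by rw [hgj]; exact hg j'
  have hjj' : (j : Fin m) ≠ j' := hjj
  have hac : ¬ (T i).Adj (j, false) (j', false) := fun h => ((hsub _ _ h).2 rfl)
  have hbd : ¬ (T i).Adj (j, true) (j', true) := fun h => ((hsub _ _ h).2 rfl)
  obtain ⟨w, t, hw, hiff⟩ := hT i
  -- stable pair {a,c}
  have hstab : ∀ (b : Bool), ¬ (T i).Adj (j, b) (j', b) →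
      IsStableSet (T i) ↑({(j, b), (j', b)} : Finset (Fin m × Bool)) := by
    intro b hnadj x hx y hy hne
    simp only [Finset.coe_insert, Finset.coe_singleton, Set.mem_insert_iff,
      Set.mem_singleton_iff] at hx hy
    rcases hx with rfl | rfl <;> rcases hy with rfl | rfl
    · exact absurd rfl hne
    · exact hnadj
    · exact fun h => hnadj ((T i).adj_symm h)
    · exact absurd rfl hne
  have hne1 : ((j, false) : Fin m × Bool) ≠ (j', false) := by
    intro h; exact hjj' (congrArg Prod.fst h)
  have hne2 : ((j, true) : Fin m × Bool) ≠ (j', true) := by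
    intro h; exact hjj' (congrArg Prod.fst h)
  have hne3 : ((j, false) : Fin m × Bool) ≠ (j, true) := by simp
  have hne4 : ((j', false) : Fin m × Bool) ≠ (j', true) := by simp
  have s1 : w (j, false) + w (j', false) ≤ t := by
    have := (hiff {(j, false), (j', false)}).mpr (hstab false hac)
    rwa [Finset.sum_pair hne1] at this
  have s2 : w (j, true) + w (j', true) ≤ t := by
    have := (hiff {(j, true), (j', true)}).mpr (hstab true hbd)
    rwa [Finset.sum_pair hne2] at this
  have n1 : ¬ (w (j, false) + w (j, true) ≤ t) := by
    rw [← Finset.sum_pair hne3]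
    intro h
    have := (hiff {(j, false), (j, true)}).mp h
    exact this (by simp) (by simp) hne3 hab
  have n2 : ¬ (w (j', false) + w (j', true) ≤ t) := by
    rw [← Finset.sum_pair hne4]
    intro h
    have := (hiff {(j', false), (j', true)}).mp h
    exact this (by simp) (by simp) hne4 hcd
  push_neg at n1 n2
  linarith

/-- Example 1: `mK₂` is a permutation graph; its edge set is the union of the edge sets
of `m` threshold graphs but of no fewer, so its threshold dimension is exactly `m`. -/
theorem thresholdDim_matching
    (m : ℕ) (hm : 1 ≤ m) :
    IsPermutationGraph (matchingGraph m) ∧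
    (∃ T : Fin m → SimpleGraph (Fin m × Bool),
      (∀ i, IsThresholdGraph (T i)) ∧
      (⋃ i, (T i).edgeSet) = (matchingGraph m).edgeSet) ∧
    (∀ k : ℕ, k < m →
      ¬ ∃ T : Fin k → SimpleGraph (Fin m × Bool),
        (∀ i, IsThresholdGraph (T i)) ∧
        (⋃ i, (T i).edgeSet) = (matchingGraph m).edgeSet) ∧
    thresholdDim (matchingGraph m) = m := by
  have hex : m ∈ {k | ∃ T : Fin k → SimpleGraph (Fin m × Bool),
      (∀ i, IsThresholdGraph (T i)) ∧ (⋃ i, (T i).edgeSet) = (matchingGraph m).edgeSet} :=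
    ⟨edgeGraph m, fun i => edgeGraph_threshold m i, edgeGraph_union m⟩
  refine ⟨matching_isPerm m, hex, fun k hk => lower_bound m k hk, ?_⟩
  refine le_antisymm (Nat.sInf_le hex) ?_
  by_contra h
  push_neg at h
  have hmemInf := Nat.sInf_mem ⟨m, hex⟩
  exact lower_bound m _ h hmemInf
end
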